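/- Let 𝐗 = (X,𝕏) be a p-rough path controlled by ω on [0,T] and let (H,H') ∈ 𝒟_X(L(ℝ^d,ℝ^e)). Then for every 0 ≤ s ≤ t ≤ T and every sequence (π_n) of partitions of [s,t] with mesh tending to 0, the compensated Riemann sums Σ_{[u,v]∈π_n} (H_u X_{uv} + H'_u 𝕏_{uv}) converge as n → ∞ to a limit ∫_s^t H d𝐗 independent of the chosen sequence of partitions. Moreover ∫_s^t H d𝐗 = ∫_s^u H d𝐗 + ∫_u^t H d𝐗 for s ≤ u ≤ t, there is a constant C with |∫_s^t H d𝐗 − H_s X_{st} − H'_s 𝕏_{st}| ≤ C ω(s,t)^{3/p} for all s ≤ t, and the path t ↦ ∫_0^t H d𝐗 belongs to C^p_ω([0,T],ℝ^e). -/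

import Mathlib

open Filter Topology Set

noncomputable section

/-- `ω` is a control on `[0,T]`: continuous on the simplex, vanishing on the diagonal,
superadditive and nonnegative. -/
def IsControl (T : ℝ) (ω : ℝ → ℝ → ℝ) : Prop :=
  ContinuousOn (fun q : ℝ × ℝ => ω q.1 q.2) {q : ℝ × ℝ | 0 ≤ q.1 ∧ q.1 ≤ q.2 ∧ q.2 ≤ T} ∧
    (∀ t : ℝ, 0 ≤ t → t ≤ T → ω t t = 0) ∧
    (∀ s u t : ℝ, 0 ≤ s → s ≤ u → u ≤ t → t ≤ T → ω s u + ω u t ≤ ω s t) ∧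
    (∀ s t : ℝ, 0 ≤ s → s ≤ t → t ≤ T → 0 ≤ ω s t)

/-- Membership in `C^{1/r}_ω([0,T],V)`: continuity on `[0,T]` together with the increment
bound `‖Y_t − Y_s‖ ≤ C ω(s,t)^r`. -/
def HolderPath (T r : ℝ) (ω : ℝ → ℝ → ℝ) {V : Type*} [NormedAddCommGroup V]
    (Y : ℝ → V) : Prop :=
  ContinuousOn Y (Set.Icc 0 T) ∧
    ∃ C : ℝ, ∀ s t : ℝ, 0 ≤ s → s ≤ t → t ≤ T → ‖Y t - Y s‖ ≤ C * ω s t ^ r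

/-- `(X, XX)` is a `p`-rough path controlled by `ω` on `[0,T]`. -/
def IsRoughPath (T p : ℝ) (ω : ℝ → ℝ → ℝ) {d : ℕ}
    (X : ℝ → Fin d → ℝ) (XX : ℝ → ℝ → Fin d → Fin d → ℝ) : Prop :=
  HolderPath T (1 / p) ω X ∧
    ContinuousOn (fun q : ℝ × ℝ => XX q.1 q.2) {q : ℝ × ℝ | 0 ≤ q.1 ∧ q.1 ≤ q.2 ∧ q.2 ≤ T} ∧
    (∃ C : ℝ, ∀ s t : ℝ, 0 ≤ s → s ≤ t → t ≤ T → ‖XX s t‖ ≤ C * ω s t ^ (2 / p)) ∧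
    (∀ s u t : ℝ, 0 ≤ s → s ≤ u → u ≤ t → t ≤ T → ∀ α β : Fin d,
      XX s t α β = XX s u α β + (X u α - X s α) * (X t β - X u β) + XX u t α β)

/-- `(H, H')` is an `X`-controlled path with values in `V`; `H' t γ` is the Gubinelli
derivative at time `t` in the direction of the `γ`-th coordinate. -/
def IsControlledPath (T p : ℝ) (ω : ℝ → ℝ → ℝ) {d : ℕ} (X : ℝ → Fin d → ℝ)
    {V : Type*} [NormedAddCommGroup V] [NormedSpace ℝ V]
    (H : ℝ → V) (H' : ℝ → Fin d → V) : Prop :=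
  HolderPath T (1 / p) ω H ∧ HolderPath T (1 / p) ω H' ∧
    ∃ C : ℝ, ∀ s t : ℝ, 0 ≤ s → s ≤ t → t ≤ T →
      ‖H t - H s - ∑ γ, (X t γ - X s γ) • H' s γ‖ ≤ C * ω s t ^ (2 / p)

/-- The bracket `[𝐗]` of the rough path `(X, XX)`. -/
def bracket {d : ℕ} (X : ℝ → Fin d → ℝ) (XX : ℝ → ℝ → Fin d → Fin d → ℝ)
    (s t : ℝ) (α β : Fin d) : ℝ :=
  (X t α - X s α) * (X t β - X s β) - (XX s t α β + XX s t β α)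

/-- A partition of `[s,t]` into `n` consecutive intervals. -/
structure RoughPartition (s t : ℝ) where
  n : ℕ
  pts : ℕ → ℝ
  mono : Monotone pts
  first : pts 0 = s
  last : pts n = t

/-- The mesh of a partition. -/
def RoughPartition.mesh {s t : ℝ} (π : RoughPartition s t) : ℝ :=
  ⨆ i : Fin π.n, (π.pts (i.1 + 1) - π.pts i.1)

/-- The Riemann sum of a two-parameter summand along a partition. -/
def riemannSum {s t : ℝ} {V : Type*} [AddCommMonoid V]
    (π : RoughPartition s t) (f : ℝ → ℝ → V) : V :=
  ∑ i ∈ Finset.range π.n, f (π.pts i) (π.pts (i + 1))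

/-- `L` is the limit of the Riemann sums of `f` along every sequence of partitions of `[s,t]`
with mesh tending to `0`. -/
def RSumLimit {V : Type*} [AddCommMonoid V] [TopologicalSpace V] (s t : ℝ)
    (f : ℝ → ℝ → V) (L : V) : Prop :=
  ∀ π : ℕ → RoughPartition s t,
    Tendsto (fun n => (π n).mesh) atTop (𝓝 0) →
      Tendsto (fun n => riemannSum (π n) f) atTop (𝓝 L)

/-- The compensated Riemann summand `H_u X_{uv} + H'_u 𝕏_{uv}` of a controlled integrand
against a rough path. -/
def roughSummand {d e : ℕ} (X : ℝ → Fin d → ℝ) (XX : ℝ → ℝ → Fin d → Fin d → ℝ)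
    (H : ℝ → Fin e → Fin d → ℝ) (H' : ℝ → Fin d → Fin e → Fin d → ℝ) :
    ℝ → ℝ → Fin e → ℝ :=
  fun u v k => (∑ γ, H u k γ * (X v γ - X u γ)) + ∑ α, ∑ β, H' u α k β * XX u v α β

/-- The partial derivative `∂_α f^i (x)`. -/
def pderiv {m n : ℕ} (f : (Fin m → ℝ) → (Fin n → ℝ)) (x : Fin m → ℝ)
    (α : Fin m) (i : Fin n) : ℝ :=
  fderiv ℝ f x (Pi.single α 1) i

/-- The second partial derivative `∂_{αβ} f^k (x)`. -/
def pderiv2 {m n : ℕ} (f : (Fin m → ℝ) → (Fin n → ℝ)) (x : Fin m → ℝ)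
    (α β : Fin m) (k : Fin n) : ℝ :=
  fderiv ℝ (fun y => fderiv ℝ f y (Pi.single β 1) k) x (Pi.single α 1)

section AuxSewing

variable {T : ℝ} {ω : ℝ → ℝ → ℝ}

lemma ctrl_mono_right (hω : IsControl T ω) {s u t : ℝ} (h0 : 0 ≤ s) (h1 : s ≤ u)
    (h2 : u ≤ t) (h3 : t ≤ T) : ω s u ≤ ω s t := by
  have := hω.2.2.1 s u t h0 h1 h2 h3
  have := hω.2.2.2 u t (h0.trans h1) h2 h3
  linarith

lemma ctrl_mono_left (hω : IsControl T ω) {s u t : ℝ} (h0 : 0 ≤ s) (h1 : s ≤ u)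
    (h2 : u ≤ t) (h3 : t ≤ T) : ω u t ≤ ω s t := by
  have := hω.2.2.1 s u t h0 h1 h2 h3
  have := hω.2.2.2 s u h0 h1 (h2.trans h3)
  linarith

/-- chain superadditivity for a monotone-on-`[0,m]` sequence in `[0,T]`. -/
lemma ctrl_chain (hω : IsControl T ω) (v : ℕ → ℝ) (m : ℕ)
    (hmono : ∀ j k, j ≤ k → k ≤ m → v j ≤ v k)
    (h0 : 0 ≤ v 0) (hT : v m ≤ T) :
    ∑ j ∈ Finset.range m, ω (v j) (v (j+1)) ≤ ω (v 0) (v m) := by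
  induction m with
  | zero => simp [hω.2.1 (v 0) h0 (le_trans (hmono 0 0 le_rfl le_rfl) hT)]
  | succ m ih =>
    rw [Finset.sum_range_succ]
    have hvm : v m ≤ v (m+1) := hmono m (m+1) (by omega) le_rfl
    have h0m : 0 ≤ v m := h0.trans (hmono 0 m (Nat.zero_le _) (by omega))
    have hsum := ih (fun j k hjk hk => hmono j k hjk (by omega)) (hvm.trans hT)
    have hsup := hω.2.2.1 (v 0) (v m) (v (m+1)) h0 (hmono 0 m (Nat.zero_le _) (by omega)) hvm hT
    linarith

/-- Uniform continuity near diagonal. -/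
lemma ctrl_unif (hω : IsControl T ω) (hT : 0 ≤ T) {ε : ℝ} (hε : 0 < ε) :
    ∃ δ > 0, ∀ a b : ℝ, 0 ≤ a → a ≤ b → b ≤ T → b - a < δ → ω a b < ε := by
  set D : Set (ℝ × ℝ) := {q : ℝ × ℝ | 0 ≤ q.1 ∧ q.1 ≤ q.2 ∧ q.2 ≤ T}
  have hDc : IsCompact D := by
    have : D = (Set.Icc 0 T ×ˢ Set.Icc 0 T) ∩ {q : ℝ × ℝ | q.1 ≤ q.2} := by
      ext q; constructor
      · rintro ⟨h1, h2, h3⟩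
        exact ⟨⟨⟨h1, (h2.trans h3)⟩, ⟨h1.trans h2, h3⟩⟩, h2⟩
      · rintro ⟨⟨⟨a1, a2⟩, ⟨b1, b2⟩⟩, hle⟩; exact ⟨a1, hle, b2⟩
    rw [this]
    exact ((isCompact_Icc.prod isCompact_Icc).inter_right
      (isClosed_le continuous_fst continuous_snd))
  have huc : UniformContinuousOn (fun q : ℝ × ℝ => ω q.1 q.2) D :=
    hDc.uniformContinuousOn_of_continuous hω.1
  rw [Metric.uniformContinuousOn_iff] at huc
  obtain ⟨δ, hδ, hδ'⟩ := huc ε hε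
  refine ⟨δ, hδ, fun a b h0 h1 h2 hab => ?_⟩
  have ha : (a, a) ∈ D := ⟨h0, le_rfl, h1.trans h2⟩
  have hb : (a, b) ∈ D := ⟨h0, h1, h2⟩
  have hdist : dist ((a,b) : ℝ × ℝ) ((a,a) : ℝ × ℝ) < δ := by
    rw [Prod.dist_eq]
    simp only [dist_self, Real.dist_eq]
    rw [abs_of_nonneg (by linarith)]
    exact sup_lt_iff.2 ⟨hδ, hab⟩

  have := hδ' (a,b) hb (a,a) ha hdist
  rw [hω.2.1 a h0 (h1.trans h2)] at this
  simp only [Real.dist_eq, sub_zero] at this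
  exact lt_of_le_of_lt (le_abs_self _) this

/-- parity split of a range sum -/
lemma sum_range_parity {M : Type*} [AddCommMonoid M] (f : ℕ → M) (n : ℕ) :
    ∑ i ∈ Finset.range n, f i =
      (∑ j ∈ Finset.range ((n+1)/2), f (2*j)) + ∑ j ∈ Finset.range (n/2), f (2*j+1) := by
  induction n with
  | zero => simp
  | succ n ih =>
    rw [Finset.sum_range_succ, ih]
    rcases Nat.even_or_odd n with ⟨m, hm⟩ | ⟨m, hm⟩
    · subst hm
      have h1 : (m + m + 1 + 1)/2 = m + 1 := by omega
      have h2 : (m + m + 1)/2 = m := by omega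
      have h3 : (m + m)/2 = m := by omega
      rw [h1, h2, h3, Finset.sum_range_succ]
      have : 2 * m = m + m := by omega
      rw [this]; abel
    · subst hm
      have h1 : (2*m + 1 + 1 + 1)/2 = m + 1 := by omega
      have h2 : (2*m + 1 + 1)/2 = m + 1 := by omega
      have h3 : (2*m + 1)/2 = m := by omega
      rw [h1, h2, h3, Finset.sum_range_succ, Finset.sum_range_succ]
      abel

section Sewing

variable {V : Type*} [NormedAddCommGroup V]
variable {T θ A : ℝ} {ω : ℝ → ℝ → ℝ} {Ξ : ℝ → ℝ → V}

/-- Riemann sum of `Ξ` along the first `n` intervals of `u`. -/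
def PS (Ξ : ℝ → ℝ → V) (n : ℕ) (u : ℕ → ℝ) : V := ∑ i ∈ Finset.range n, Ξ (u i) (u (i+1))

lemma Xi_diag (hω : IsControl T ω) (hθ : 1 < θ)
    (hδ : ∀ s u t : ℝ, 0 ≤ s → s ≤ u → u ≤ t → t ≤ T →
      ‖Ξ s t - Ξ s u - Ξ u t‖ ≤ A * ω s t ^ θ)
    {r : ℝ} (h0 : 0 ≤ r) (hT : r ≤ T) : Ξ r r = 0 := by
  have h := hδ r r r h0 le_rfl le_rfl hT
  rw [hω.2.1 r h0 hT, Real.zero_rpow (by linarith : θ ≠ 0)] at h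
  have : ‖Ξ r r‖ ≤ 0 := by
    calc ‖Ξ r r‖ = ‖Ξ r r - Ξ r r - Ξ r r‖ := by rw [sub_self, zero_sub, norm_neg]
    _ ≤ A * 0 := h
    _ = 0 := by ring
  simpa using norm_le_zero_iff.1 this

/-- The maximal inequality for Riemann sums along a partition. -/
lemma sewing_max (hω : IsControl T ω) (hθ : 1 < θ) (hA : 0 ≤ A)
    (hδ : ∀ s u t : ℝ, 0 ≤ s → s ≤ u → u ≤ t → t ≤ T →
      ‖Ξ s t - Ξ s u - Ξ u t‖ ≤ A * ω s t ^ θ)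
    (n : ℕ) :
    ∀ u : ℕ → ℝ, (∀ j k : ℕ, j ≤ k → k ≤ n → u j ≤ u k) → 0 ≤ u 0 → u n ≤ T →
      ‖PS Ξ n u - Ξ (u 0) (u n)‖ ≤
        A * (∑ k ∈ Finset.range n, (2/(k:ℝ))^θ) * ω (u 0) (u n) ^ θ := by
  induction n with
  | zero =>
    intro u _ h0 hT
    simp [PS, Xi_diag hω hθ hδ h0 hT]
  | succ n ih =>
    intro u hu h0 hT
    rcases Nat.eq_zero_or_pos n with rfl | hn
    · have : PS Ξ 1 u = Ξ (u 0) (u 1) := by simp [PS]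
      rw [this, sub_self, norm_zero]
      refine mul_nonneg (mul_nonneg hA ?_) (Real.rpow_nonneg (hω.2.2.2 _ _ h0 (hu 0 1 (by omega) le_rfl) hT) _)
      exact Finset.sum_nonneg fun k _ => Real.rpow_nonneg (by positivity) _
    -- points lie in [0,T]
    have hj0 : ∀ j, j ≤ n+1 → 0 ≤ u j := fun j hj => h0.trans (hu 0 j (Nat.zero_le _) hj)
    have hjT : ∀ j, j ≤ n+1 → u j ≤ T := fun j hj => (hu j (n+1) hj le_rfl).trans hT
    set w := ω (u 0) (u (n+1)) with hw
    have hw0 : 0 ≤ w := hω.2.2.2 _ _ h0 (hu 0 (n+1) (Nat.zero_le _) le_rfl) hT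
    -- the key gap-sum bound
    have S2 : ∑ i ∈ Finset.range n, ω (u i) (u (i+2)) ≤ 2 * w := by
      rw [sum_range_parity (fun i => ω (u i) (u (i+2))) n]
      have hb1 : ∑ j ∈ Finset.range ((n+1)/2), ω (u (2*j)) (u (2*j+2)) ≤ w := by
        have hc := ctrl_chain hω (fun j => u (2*j)) ((n+1)/2)
          (fun j k hjk hk => hu (2*j) (2*k) (by omega) (by omega)) h0
          (hjT _ (by omega))
        have : ∑ j ∈ Finset.range ((n+1)/2), ω (u (2*j)) (u (2*j+2)) =
            ∑ j ∈ Finset.range ((n+1)/2), ω (u (2*j)) (u (2*(j+1))) := by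
          apply Finset.sum_congr rfl; intro j _
          rw [show 2*(j+1) = 2*j+2 from by omega]
        rw [this]
        refine hc.trans (ctrl_mono_right hω h0 (hu 0 _ (Nat.zero_le _) (by omega))
          (hu _ (n+1) (by omega) le_rfl) hT)
      have hb2 : ∑ j ∈ Finset.range (n/2), ω (u (2*j+1)) (u (2*j+3)) ≤ w := by
        have hc := ctrl_chain hω (fun j => u (2*j+1)) (n/2)
          (fun j k hjk hk => hu (2*j+1) (2*k+1) (by omega) (by omega))
          (hj0 1 (by omega)) (hjT _ (by omega))
        have : ∑ j ∈ Finset.range (n/2), ω (u (2*j+1)) (u (2*j+3)) =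
            ∑ j ∈ Finset.range (n/2), ω (u (2*j+1)) (u (2*(j+1)+1)) := by
          apply Finset.sum_congr rfl; intro j _
          rw [show 2*(j+1)+1 = 2*j+3 from by omega]
        rw [this]
        refine hc.trans ?_
        refine le_trans (ctrl_mono_right hω (hj0 1 (by omega)) (hu 1 _ (by omega) (by omega))
          (hu _ (n+1) (by omega) le_rfl) hT) ?_
        exact ctrl_mono_left hω h0 (hu 0 1 (by omega) (by omega)) (hu 1 (n+1) (by omega) le_rfl) hT
      have : ∑ j ∈ Finset.range ((n+1)/2), (fun i => ω (u i) (u (i+2))) (2*j) +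
          ∑ j ∈ Finset.range (n/2), (fun i => ω (u i) (u (i+2))) (2*j+1) ≤ w + w := by
        apply add_le_add
        · simpa using hb1
        · have : ∀ j : ℕ, (2*j+1) + 2 = 2*j+3 := fun j => by omega
          simpa [this] using hb2
      linarith
    -- choose the gap to remove
    obtain ⟨i, hi_mem, hi_min⟩ := Finset.exists_min_image (Finset.range n)
      (fun i => ω (u i) (u (i+2))) ⟨0, Finset.mem_range.2 hn⟩
    have hi_lt : i < n := Finset.mem_range.1 hi_mem
    have hgap0 : 0 ≤ ω (u i) (u (i+2)) :=
      hω.2.2.2 _ _ (hj0 i (by omega)) (hu i (i+2) (by omega) (by omega)) (hjT _ (by omega))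
    have hgap : ω (u i) (u (i+2)) ≤ 2 * w / n := by
      rw [le_div_iff₀ (by exact_mod_cast hn)]
      have hcard : (Finset.range n).card • ω (u i) (u (i+2)) ≤
          ∑ j ∈ Finset.range n, ω (u j) (u (j+2)) :=
        Finset.card_nsmul_le_sum _ _ _ (fun j hj => hi_min j hj)
      simp only [Finset.card_range, nsmul_eq_mul] at hcard
      calc ω (u i) (u (i+2)) * n = n * ω (u i) (u (i+2)) := by ring
      _ ≤ ∑ j ∈ Finset.range n, ω (u j) (u (j+2)) := hcard
      _ ≤ 2 * w := S2
    -- the reduced partition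
    set u' : ℕ → ℝ := fun j => if j ≤ i then u j else u (j+1) with hu'
    have hu'mono : ∀ j k : ℕ, j ≤ k → k ≤ n → u' j ≤ u' k := by
      intro j k hjk hk
      simp only [hu']
      split_ifs with h1 h2 h3
      · exact hu j k hjk (by omega)
      · exact hu j (k+1) (by omega) (by omega)
      · exact hu (j+1) k (by omega) (by omega)
      · exact hu (j+1) (k+1) (by omega) (by omega)
    have hu'0 : u' 0 = u 0 := by simp [hu']
    have hu'n : u' n = u (n+1) := by simp [hu', Nat.not_le.2 hi_lt, if_neg (by omega : ¬ n ≤ i)]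
    -- the sum identity
    have hPS : PS Ξ (n+1) u - PS Ξ n u' =
        Ξ (u i) (u (i+1)) + Ξ (u (i+1)) (u (i+2)) - Ξ (u i) (u (i+2)) := by
      have hd1 : PS Ξ n u' = (∑ j ∈ Finset.Ico 0 i, Ξ (u j) (u (j+1)))
          + Ξ (u i) (u (i+2)) + ∑ j ∈ Finset.Ico (i+1) n, Ξ (u (j+1)) (u (j+2)) := by
        have e1 : ∑ j ∈ Finset.Ico 0 i, Ξ (u' j) (u' (j+1)) =
            ∑ j ∈ Finset.Ico 0 i, Ξ (u j) (u (j+1)) := by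
          apply Finset.sum_congr rfl; intro j hj
          have hj' := (Finset.mem_Ico.1 hj).2
          simp only [hu']
          rw [if_pos (by omega), if_pos (by omega)]
        have e2 : Ξ (u' i) (u' (i+1)) = Ξ (u i) (u (i+2)) := by
          simp only [hu']
          rw [if_pos le_rfl, if_neg (by omega)]
        have e3 : ∑ j ∈ Finset.Ico (i+1) n, Ξ (u' j) (u' (j+1)) =
            ∑ j ∈ Finset.Ico (i+1) n, Ξ (u (j+1)) (u (j+2)) := by
          apply Finset.sum_congr rfl; intro j hj
          have hj' := (Finset.mem_Ico.1 hj).1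
          simp only [hu']
          rw [if_neg (by omega), if_neg (by omega)]
        rw [PS, Finset.range_eq_Ico, ← Finset.sum_Ico_consecutive _ (Nat.zero_le i) hi_lt.le,
          Finset.sum_eq_sum_Ico_succ_bot hi_lt, e1, e2, e3]
        abel
      have hd2 : PS Ξ (n+1) u = (∑ j ∈ Finset.Ico 0 i, Ξ (u j) (u (j+1)))
          + Ξ (u i) (u (i+1)) + Ξ (u (i+1)) (u (i+2))
          + ∑ j ∈ Finset.Ico (i+2) (n+1), Ξ (u j) (u (j+1)) := by
        rw [PS, Finset.range_eq_Ico, ← Finset.sum_Ico_consecutive _ (Nat.zero_le i) (by omega : i ≤ n+1),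
          Finset.sum_eq_sum_Ico_succ_bot (by omega : i < n+1),
          Finset.sum_eq_sum_Ico_succ_bot (by omega : i+1 < n+1)]
        rw [show i+1+1 = i+2 from rfl]
        abel
      have hre : ∑ j ∈ Finset.Ico (i+1) n, Ξ (u (j+1)) (u (j+2)) =
          ∑ j ∈ Finset.Ico (i+2) (n+1), Ξ (u j) (u (j+1)) := by
        rw [Finset.sum_Ico_eq_sum_range, Finset.sum_Ico_eq_sum_range]
        rw [show n + 1 - (i+2) = n - (i+1) from by omega]
        apply Finset.sum_congr rfl; intro k _
        rw [show i+1+k+1 = i+2+k from by omega, show i+1+k+2 = i+2+k+1 from by omega]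
      rw [hd1, hd2, hre]; abel
    -- conclude
    have hself := hδ (u i) (u (i+1)) (u (i+2)) (hj0 i (by omega))
      (hu i (i+1) (by omega) (by omega)) (hu (i+1) (i+2) (by omega) (by omega)) (hjT _ (by omega))
    have hIH := ih u' hu'mono (by rw [hu'0]; exact h0) (by rw [hu'n]; exact hjT _ le_rfl)
    rw [hu'0, hu'n] at hIH
    have hδbound : ‖PS Ξ (n+1) u - PS Ξ n u'‖ ≤ A * (2/(n:ℝ))^θ * w ^ θ := by
      rw [hPS]
      have : ‖Ξ (u i) (u (i+1)) + Ξ (u (i+1)) (u (i+2)) - Ξ (u i) (u (i+2))‖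
          = ‖Ξ (u i) (u (i+2)) - Ξ (u i) (u (i+1)) - Ξ (u (i+1)) (u (i+2))‖ := by
        rw [← norm_neg]; congr 1; abel
      rw [this]
      refine hself.trans ?_
      have h2w : ω (u i) (u (i+2)) ^ θ ≤ (2 * w / n) ^ θ :=
        Real.rpow_le_rpow hgap0 hgap (by linarith)
      have heq : (2 * w / (n:ℝ)) ^ θ = (2/(n:ℝ))^θ * w ^ θ := by
        rw [show 2 * w / (n:ℝ) = (2/(n:ℝ)) * w from by ring,
          Real.mul_rpow (by positivity) hw0]
      calc A * ω (u i) (u (i+2)) ^ θ ≤ A * (2 * w / n) ^ θ := by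
            exact mul_le_mul_of_nonneg_left h2w hA
      _ = A * ((2/(n:ℝ))^θ * w ^ θ) := by rw [heq]
      _ = A * (2/(n:ℝ))^θ * w ^ θ := by ring
    calc ‖PS Ξ (n+1) u - Ξ (u 0) (u (n+1))‖
        ≤ ‖PS Ξ n u' - Ξ (u 0) (u (n+1))‖ + ‖PS Ξ (n+1) u - PS Ξ n u'‖ := by
          have : PS Ξ (n+1) u - Ξ (u 0) (u (n+1)) =
              (PS Ξ n u' - Ξ (u 0) (u (n+1))) + (PS Ξ (n+1) u - PS Ξ n u') := by abel
          rw [this]; exact norm_add_le _ _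
    _ ≤ A * (∑ k ∈ Finset.range n, (2/(k:ℝ))^θ) * w ^ θ + A * (2/(n:ℝ))^θ * w ^ θ :=
        add_le_add hIH hδbound
    _ = A * (∑ k ∈ Finset.range (n+1), (2/(k:ℝ))^θ) * w ^ θ := by
        rw [Finset.sum_range_succ]; ring

/-- block decomposition of a sum -/
lemma sum_blocks {M : Type*} [AddCommMonoid M] (g : ℕ → M) (k : ℕ → ℕ) (n : ℕ)
    (hk : ∀ j j', j ≤ j' → j' ≤ n → k j ≤ k j') :
    ∑ j ∈ Finset.range n, ∑ l ∈ Finset.Ico (k j) (k (j+1)), g l =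
      ∑ l ∈ Finset.Ico (k 0) (k n), g l := by
  induction n with
  | zero => simp
  | succ n ih =>
    rw [Finset.sum_range_succ, ih (fun j j' h h' => hk j j' h (by omega)),
      Finset.sum_Ico_consecutive]
    · exact hk 0 n (Nat.zero_le _) (by omega)
    · exact hk n (n+1) (by omega) le_rfl

/-- the sewing constant -/
noncomputable def sewK (θ : ℝ) : ℝ := ∑' k : ℕ, (2/(k:ℝ))^θ

lemma sewK_summable (hθ : 1 < θ) : Summable (fun k : ℕ => (2/(k:ℝ))^θ) := by
  have heq : (fun k : ℕ => (2/(k:ℝ))^θ) = fun k : ℕ => (2:ℝ)^θ * (1/(k:ℝ)^θ) := by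
    funext k
    rcases Nat.eq_zero_or_pos k with rfl | hk
    · simp [Real.zero_rpow (by linarith : θ ≠ 0)]
    · rw [Real.div_rpow (by norm_num) (Nat.cast_nonneg k)]
      ring
  rw [heq]
  exact ((Real.summable_one_div_nat_rpow).2 hθ).mul_left _

lemma B_le_sewK (hθ : 1 < θ) (n : ℕ) :
    ∑ k ∈ Finset.range n, (2/(k:ℝ))^θ ≤ sewK θ :=
  Summable.sum_le_tsum _ (fun k _ => Real.rpow_nonneg (by positivity) _) (sewK_summable hθ)

lemma sewK_nonneg (hθ : 1 < θ) : 0 ≤ sewK θ :=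
  tsum_nonneg (fun k => Real.rpow_nonneg (by positivity) _)

/-- maximal inequality with the uniform constant -/
lemma sewing_max' (hω : IsControl T ω) (hθ : 1 < θ) (hA : 0 ≤ A)
    (hδ : ∀ s u t : ℝ, 0 ≤ s → s ≤ u → u ≤ t → t ≤ T →
      ‖Ξ s t - Ξ s u - Ξ u t‖ ≤ A * ω s t ^ θ)
    (n : ℕ) (u : ℕ → ℝ) (hu : ∀ j k : ℕ, j ≤ k → k ≤ n → u j ≤ u k)
    (h0 : 0 ≤ u 0) (hT : u n ≤ T) :
    ‖PS Ξ n u - Ξ (u 0) (u n)‖ ≤ A * sewK θ * ω (u 0) (u n) ^ θ := by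
  refine (sewing_max hω hθ hA hδ n u hu h0 hT).trans ?_
  have hω0 : 0 ≤ ω (u 0) (u n) ^ θ :=
    Real.rpow_nonneg (hω.2.2.2 _ _ h0 (hu 0 n (Nat.zero_le _) le_rfl) hT) _
  have := B_le_sewK (θ := θ) hθ n
  nlinarith [mul_nonneg hA hω0]

/-- refinement estimate -/
lemma refine_est (hω : IsControl T ω) (hθ : 1 < θ) (hA : 0 ≤ A)
    (hδ : ∀ s u t : ℝ, 0 ≤ s → s ≤ u → u ≤ t → t ≤ T →
      ‖Ξ s t - Ξ s u - Ξ u t‖ ≤ A * ω s t ^ θ)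
    {s t : ℝ} (h0 : 0 ≤ s) (hT : t ≤ T)
    {n : ℕ} {u : ℕ → ℝ} (humono : ∀ j k : ℕ, j ≤ k → k ≤ n → u j ≤ u k)
    (hu0 : u 0 = s) (hun : u n = t)
    {N : ℕ} {w : ℕ → ℝ} (hwmono : ∀ j k : ℕ, j ≤ k → k ≤ N → w j ≤ w k)
    (k : ℕ → ℕ) (hk0 : k 0 = 0) (hkn : k n = N)
    (hkmono : ∀ j j', j ≤ j' → j' ≤ n → k j ≤ k j')
    (hwk : ∀ j, j ≤ n → w (k j) = u j)
    {ε : ℝ} (hε : 0 ≤ ε) (hmesh : ∀ j, j < n → ω (u j) (u (j+1)) ≤ ε) :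
    ‖PS Ξ N w - PS Ξ n u‖ ≤ A * sewK θ * ε ^ (θ - 1) * ω s t := by
  have hst : s ≤ t := by rw [← hu0, ← hun]; exact humono 0 n (Nat.zero_le _) le_rfl
  have h00 : 0 ≤ u 0 := by rw [hu0]; exact h0
  have hnT : u n ≤ T := by rw [hun]; exact hT
  have hu0T : ∀ j, j ≤ n → 0 ≤ u j := fun j hj => h00.trans (humono 0 j (Nat.zero_le _) hj)
  have huTT : ∀ j, j ≤ n → u j ≤ T := fun j hj => (humono j n hj le_rfl).trans hnT
  have hkle : ∀ j, j ≤ n → k j ≤ N := fun j hj => by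
    rw [← hkn]; exact hkmono j n hj le_rfl
  -- decompose PS Ξ N w into blocks
  have hdec : PS Ξ N w = ∑ j ∈ Finset.range n,
      ∑ l ∈ Finset.Ico (k j) (k (j+1)), Ξ (w l) (w (l+1)) := by
    rw [sum_blocks _ k n hkmono, hk0, hkn, PS, Finset.range_eq_Ico]
  have hblock : ∀ j, j < n →
      ‖(∑ l ∈ Finset.Ico (k j) (k (j+1)), Ξ (w l) (w (l+1))) - Ξ (u j) (u (j+1))‖ ≤
        A * sewK θ * ω (u j) (u (j+1)) ^ θ := by
    intro j hj
    set m := k (j+1) - k j with hm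
    set v : ℕ → ℝ := fun l => w (k j + l) with hv
    have hkj : k j ≤ k (j+1) := hkmono j (j+1) (by omega) (by omega)
    have hkjN : k (j+1) ≤ N := hkle (j+1) (by omega)
    have hsum : ∑ l ∈ Finset.Ico (k j) (k (j+1)), Ξ (w l) (w (l+1)) = PS Ξ m v := by
      rw [PS, Finset.sum_Ico_eq_sum_range]
      apply Finset.sum_congr (by rw [hm]) (fun l _ => rfl)
    have hv0 : v 0 = u j := by rw [hv]; simpa using hwk j (by omega)
    have hvm : v m = u (j+1) := by
      rw [hv]; simp only
      rw [show k j + m = k (j+1) from by omega]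
      exact hwk (j+1) (by omega)
    have hvmono : ∀ a b : ℕ, a ≤ b → b ≤ m → v a ≤ v b := fun a b hab hb =>
      hwmono (k j + a) (k j + b) (by omega) (by omega)
    have := sewing_max' hω hθ hA hδ m v hvmono
      (by rw [hv0]; exact hu0T j (by omega))
      (by rw [hvm]; exact huTT (j+1) (by omega))
    rw [hv0, hvm] at this
    rw [hsum]
    exact this
  have hωj : ∀ j, j < n → 0 ≤ ω (u j) (u (j+1)) := fun j hj =>
    hω.2.2.2 _ _ (hu0T j (by omega)) (humono j (j+1) (by omega) (by omega)) (huTT (j+1) (by omega))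
  have hchain : ∑ j ∈ Finset.range n, ω (u j) (u (j+1)) ≤ ω s t := by
    rw [← hu0, ← hun]
    exact ctrl_chain hω u n humono (by rw [hu0]; exact h0) (by rw [hun]; exact hT)
  have hKA : 0 ≤ A * sewK θ := mul_nonneg hA (sewK_nonneg hθ)
  calc ‖PS Ξ N w - PS Ξ n u‖
      = ‖∑ j ∈ Finset.range n, ((∑ l ∈ Finset.Ico (k j) (k (j+1)), Ξ (w l) (w (l+1)))
          - Ξ (u j) (u (j+1)))‖ := by rw [hdec, PS, Finset.sum_sub_distrib]
    _ ≤ ∑ j ∈ Finset.range n, ‖(∑ l ∈ Finset.Ico (k j) (k (j+1)), Ξ (w l) (w (l+1)))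
          - Ξ (u j) (u (j+1))‖ := norm_sum_le _ _
    _ ≤ ∑ j ∈ Finset.range n, A * sewK θ * (ε ^ (θ-1) * ω (u j) (u (j+1))) := by
        apply Finset.sum_le_sum
        intro j hj
        have hj' := Finset.mem_range.1 hj
        refine (hblock j hj').trans ?_
        apply mul_le_mul_of_nonneg_left _ hKA
        have : ω (u j) (u (j+1)) ^ θ = ω (u j) (u (j+1)) ^ (θ-1) * ω (u j) (u (j+1)) := by
          have h := Real.rpow_add_of_nonneg (hωj j hj')
            (by linarith : (0:ℝ) ≤ θ - 1) (by norm_num : (0:ℝ) ≤ 1)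
          rw [show θ - 1 + 1 = θ from by ring, Real.rpow_one] at h
          exact h
        rw [this]
        apply mul_le_mul_of_nonneg_right _ (hωj j hj')
        exact Real.rpow_le_rpow (hωj j hj') (hmesh j hj') (by linarith)
    _ = A * sewK θ * ε ^ (θ-1) * ∑ j ∈ Finset.range n, ω (u j) (u (j+1)) := by
        rw [Finset.mul_sum]; apply Finset.sum_congr rfl; intro j _; ring
    _ ≤ A * sewK θ * ε ^ (θ-1) * ω s t := by
        apply mul_le_mul_of_nonneg_left hchain
        exact mul_nonneg hKA (Real.rpow_nonneg hε _)

end Sewing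

/-- enumeration of a finite set of points in `[s,t]` containing `s` and `t`,
together with index maps for partitions whose points lie in `F`. -/
lemma embed_exists {s t : ℝ} (F : Finset ℝ) (hs : s ∈ F) (ht : t ∈ F)
    (hF : ∀ x ∈ F, s ≤ x ∧ x ≤ t) :
    ∃ (N : ℕ) (w : ℕ → ℝ), (∀ a b : ℕ, a ≤ b → b ≤ N → w a ≤ w b) ∧ w 0 = s ∧ w N = t ∧
      ∀ (n : ℕ) (u : ℕ → ℝ), (∀ j k : ℕ, j ≤ k → k ≤ n → u j ≤ u k) → u 0 = s → u n = t →
        (∀ j, j ≤ n → u j ∈ F) →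
        ∃ k : ℕ → ℕ, k 0 = 0 ∧ k n = N ∧ (∀ j j', j ≤ j' → j' ≤ n → k j ≤ k j') ∧
          ∀ j, j ≤ n → w (k j) = u j := by
  have hFne : F.Nonempty := ⟨s, hs⟩
  obtain ⟨N, hcard⟩ : ∃ N, F.card = N + 1 :=
    ⟨F.card - 1, by have := Finset.card_pos.2 hFne; omega⟩
  set e := F.orderIsoOfFin hcard with he
  set w : ℕ → ℝ := fun l => (e ⟨min l N, by omega⟩ : ℝ) with hw
  have hwmem : ∀ l, w l ∈ F := fun l => (e ⟨min l N, by omega⟩).2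
  have hwmono : ∀ a b : ℕ, a ≤ b → b ≤ N → w a ≤ w b := by
    intro a b hab hb
    exact Subtype.coe_le_coe.2 (e.monotone (by simp [Fin.mk_le_mk]; omega))
  have hwinj : ∀ a b : ℕ, a ≤ N → b ≤ N → w a = w b → a = b := by
    intro a b ha hb hab
    have := e.injective (Subtype.ext hab)
    rw [Fin.mk.injEq] at this
    omega
  have hidx : ∀ x ∈ F, ∃ l, l ≤ N ∧ w l = x := by
    intro x hx
    refine ⟨(e.symm ⟨x, hx⟩).val, Nat.lt_succ_iff.1 (e.symm ⟨x, hx⟩).2, ?_⟩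
    simp only [hw, Nat.min_eq_left (Nat.lt_succ_iff.1 (e.symm ⟨x, hx⟩).2)]
    rw [show (⟨(e.symm ⟨x, hx⟩).val, by omega⟩ : Fin (N+1)) = e.symm ⟨x, hx⟩ from
      Fin.ext rfl]
    simp
  have hw0 : w 0 = s := by
    obtain ⟨l, hl, hls⟩ := hidx s hs
    have h1 : s ≤ w 0 := (hF _ (hwmem 0)).1
    have h2 : w 0 ≤ w l := hwmono 0 l (Nat.zero_le _) hl
    rw [hls] at h2
    linarith
  have hwN : w N = t := by
    obtain ⟨l, hl, hlt⟩ := hidx t ht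
    have h1 : w N ≤ t := (hF _ (hwmem N)).2
    have h2 : w l ≤ w N := hwmono l N hl le_rfl
    rw [hlt] at h2
    linarith
  refine ⟨N, w, hwmono, hw0, hwN, ?_⟩
  intro n u humono hu0 hun huF
  have hk : ∀ j, ∃ l, l ≤ N ∧ w l = u (min j n) := fun j => hidx _ (huF _ (Nat.min_le_right _ _))
  choose k hkle hkw using hk
  have hwk : ∀ j, j ≤ n → w (k j) = u j := fun j hj => by
    rw [hkw j, Nat.min_eq_left hj]
  have hkmono : ∀ j j', j ≤ j' → j' ≤ n → k j ≤ k j' := by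
    intro j j' hjj hj'
    by_contra hlt
    push_neg at hlt
    have h1 : w (k j') ≤ w (k j) := hwmono _ _ hlt.le (hkle j)
    have h2 : u j ≤ u j' := humono j j' hjj hj'
    rw [hwk j (hjj.trans hj'), hwk j' hj'] at h1
    have heq : u j = u j' := le_antisymm h2 h1
    have : w (k j) = w (k j') := by rw [hwk j (hjj.trans hj'), hwk j' hj', heq]
    exact absurd (hwinj _ _ (hkle j) (hkle j') this) (by omega)
  refine ⟨k, ?_, ?_, hkmono, hwk⟩
  · have : w (k 0) = w 0 := by rw [hwk 0 (Nat.zero_le _), hu0, hw0]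
    exact hwinj _ _ (hkle 0) (Nat.zero_le _) this
  · have : w (k n) = w N := by rw [hwk n le_rfl, hun, hwN]
    exact hwinj _ _ (hkle n) le_rfl this


namespace RoughPartition

variable {s t : ℝ}

lemma le_endpoints (π : RoughPartition s t) {j : ℕ} (hj : j ≤ π.n) :
    s ≤ π.pts j ∧ π.pts j ≤ t := by
  constructor
  · have h := π.mono (Nat.zero_le j); rw [π.first] at h; exact h
  · have h := π.mono hj; rw [π.last] at h; exact h

lemma st_le (π : RoughPartition s t) : s ≤ t := by
  have h := π.mono (Nat.zero_le π.n); rw [π.first, π.last] at h; exact h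

lemma increment_le_mesh (π : RoughPartition s t) {j : ℕ} (hj : j < π.n) :
    π.pts (j+1) - π.pts j ≤ π.mesh := by
  rw [RoughPartition.mesh]
  exact le_ciSup (Set.Finite.bddAbove (Set.finite_range
    (fun i : Fin π.n => π.pts (i.1 + 1) - π.pts i.1))) (⟨j, hj⟩ : Fin π.n)

lemma mesh_nonneg (π : RoughPartition s t) : 0 ≤ π.mesh := by
  rcases Nat.eq_zero_or_pos π.n with h | h
  · rw [RoughPartition.mesh]
    rw [h]
    simp [Real.iSup_of_isEmpty]
  · exact le_trans (by
      have := π.mono (Nat.le_succ 0)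
      linarith) (π.increment_le_mesh h)

end RoughPartition

section SewingLimit

variable {V : Type*} [NormedAddCommGroup V]
variable {T θ A : ℝ} {ω : ℝ → ℝ → ℝ} {Ξ : ℝ → ℝ → V}

/-- uniform estimate on the difference of two Riemann sums -/
lemma two_partition_est (hω : IsControl T ω) (hθ : 1 < θ) (hA : 0 ≤ A)
    (hδ : ∀ s u t : ℝ, 0 ≤ s → s ≤ u → u ≤ t → t ≤ T →
      ‖Ξ s t - Ξ s u - Ξ u t‖ ≤ A * ω s t ^ θ)
    {s t : ℝ} (h0 : 0 ≤ s) (hT : t ≤ T)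
    (π1 π2 : RoughPartition s t) {ε1 ε2 : ℝ} (hε1 : 0 ≤ ε1) (hε2 : 0 ≤ ε2)
    (hb1 : ∀ j, j < π1.n → ω (π1.pts j) (π1.pts (j+1)) ≤ ε1)
    (hb2 : ∀ j, j < π2.n → ω (π2.pts j) (π2.pts (j+1)) ≤ ε2) :
    ‖riemannSum π1 Ξ - riemannSum π2 Ξ‖ ≤
      A * sewK θ * (ε1^(θ-1) + ε2^(θ-1)) * ω s t := by
  have hst : s ≤ t := π1.st_le
  set F : Finset ℝ := ((Finset.range (π1.n+1)).image π1.pts) ∪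
    ((Finset.range (π2.n+1)).image π2.pts) with hF
  have hsF : s ∈ F := by
    apply Finset.mem_union_left
    exact Finset.mem_image.2 ⟨0, Finset.mem_range.2 (by omega), π1.first⟩
  have htF : t ∈ F := by
    apply Finset.mem_union_left
    exact Finset.mem_image.2 ⟨π1.n, Finset.mem_range.2 (by omega), π1.last⟩
  have hFmem : ∀ x ∈ F, s ≤ x ∧ x ≤ t := by
    intro x hx
    rcases Finset.mem_union.1 hx with h | h <;>
    · obtain ⟨j, hj, rfl⟩ := Finset.mem_image.1 h
      rw [Finset.mem_range] at hj
      exact RoughPartition.le_endpoints _ (by omega)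
  obtain ⟨N, w, hwmono, hw0, hwN, hmaps⟩ := embed_exists F hsF htF hFmem
  have hu1 : ∀ j k : ℕ, j ≤ k → k ≤ π1.n → π1.pts j ≤ π1.pts k := fun j k hjk _ => π1.mono hjk
  have hu2 : ∀ j k : ℕ, j ≤ k → k ≤ π2.n → π2.pts j ≤ π2.pts k := fun j k hjk _ => π2.mono hjk
  obtain ⟨k1, hk10, hk1n, hk1mono, hk1w⟩ := hmaps π1.n π1.pts hu1 π1.first π1.last
    (fun j hj => Finset.mem_union_left _ (Finset.mem_image.2 ⟨j, Finset.mem_range.2 (by omega), rfl⟩))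
  obtain ⟨k2, hk20, hk2n, hk2mono, hk2w⟩ := hmaps π2.n π2.pts hu2 π2.first π2.last
    (fun j hj => Finset.mem_union_right _ (Finset.mem_image.2 ⟨j, Finset.mem_range.2 (by omega), rfl⟩))
  have hr1 : ‖PS Ξ N w - PS Ξ π1.n π1.pts‖ ≤ A * sewK θ * ε1^(θ-1) * ω s t :=
    refine_est hω hθ hA hδ h0 hT hu1 π1.first π1.last hwmono k1 hk10 hk1n hk1mono hk1w hε1 hb1
  have hr2 : ‖PS Ξ N w - PS Ξ π2.n π2.pts‖ ≤ A * sewK θ * ε2^(θ-1) * ω s t :=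
    refine_est hω hθ hA hδ h0 hT hu2 π2.first π2.last hwmono k2 hk20 hk2n hk2mono hk2w hε2 hb2
  have hrs1 : riemannSum π1 Ξ = PS Ξ π1.n π1.pts := rfl
  have hrs2 : riemannSum π2 Ξ = PS Ξ π2.n π2.pts := rfl
  rw [hrs1, hrs2]
  calc ‖PS Ξ π1.n π1.pts - PS Ξ π2.n π2.pts‖
      ≤ ‖PS Ξ N w - PS Ξ π1.n π1.pts‖ + ‖PS Ξ N w - PS Ξ π2.n π2.pts‖ := by
        rw [show PS Ξ π1.n π1.pts - PS Ξ π2.n π2.pts =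
          -(PS Ξ N w - PS Ξ π1.n π1.pts) + (PS Ξ N w - PS Ξ π2.n π2.pts) from by abel]
        exact (norm_add_le _ _).trans (by rw [norm_neg])
    _ ≤ A * sewK θ * ε1^(θ-1) * ω s t + A * sewK θ * ε2^(θ-1) * ω s t := add_le_add hr1 hr2
    _ = A * sewK θ * (ε1^(θ-1) + ε2^(θ-1)) * ω s t := by ring

/-- The maximal inequality, for partitions. -/
lemma partition_est (hω : IsControl T ω) (hθ : 1 < θ) (hA : 0 ≤ A)
    (hδ : ∀ s u t : ℝ, 0 ≤ s → s ≤ u → u ≤ t → t ≤ T →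
      ‖Ξ s t - Ξ s u - Ξ u t‖ ≤ A * ω s t ^ θ)
    {s t : ℝ} (h0 : 0 ≤ s) (hT : t ≤ T) (π : RoughPartition s t) :
    ‖riemannSum π Ξ - Ξ s t‖ ≤ A * sewK θ * ω s t ^ θ := by
  have := sewing_max' hω hθ hA hδ π.n π.pts (fun j k hjk _ => π.mono hjk)
    (by rw [π.first]; exact h0) (by rw [π.last]; exact hT)
  rw [π.first, π.last] at this
  exact this

end SewingLimit

section Conv

variable {V : Type*} [NormedAddCommGroup V]
variable {T θ A : ℝ} {ω : ℝ → ℝ → ℝ} {Ξ : ℝ → ℝ → V}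

/-- uniform partition -/
noncomputable def unifP {s t : ℝ} (hst : s ≤ t) (m : ℕ) : RoughPartition s t where
  n := m+1
  pts := fun j => s + ((min j (m+1) : ℕ) : ℝ) * ((t-s)/((m:ℝ)+1))
  mono := by
    intro j k hjk
    have hc : ((min j (m+1) : ℕ) : ℝ) ≤ ((min k (m+1) : ℕ) : ℝ) := by
      exact_mod_cast (by omega : min j (m+1) ≤ min k (m+1))
    have hd : (0:ℝ) ≤ (t-s)/((m:ℝ)+1) := div_nonneg (by linarith) (by positivity)
    simp only
    nlinarith
  first := by simp
  last := by
    simp only [Nat.min_self]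
    have hm : ((m:ℝ)+1) ≠ 0 := by positivity
    push_cast
    field_simp
    ring
  
lemma unifP_mesh {s t : ℝ} (hst : s ≤ t) (m : ℕ) :
    (unifP hst m).mesh = (t-s)/((m:ℝ)+1) := by
  have hinc : ∀ i : Fin (m+1),
      ((unifP hst m).pts (i.1+1) - (unifP hst m).pts i.1) = (t-s)/((m:ℝ)+1) := by
    intro i
    have hi := i.2
    show (s + ((min (i.1+1) (m+1) : ℕ) : ℝ) * _) - (s + ((min i.1 (m+1) : ℕ) : ℝ) * _) = _
    rw [Nat.min_eq_left (by omega), Nat.min_eq_left (by omega)]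
    push_cast
    ring
  show (⨆ i : Fin ((unifP hst m).n), ((unifP hst m).pts (i.1+1) - (unifP hst m).pts i.1)) = _
  have : (fun i : Fin ((unifP hst m).n) => ((unifP hst m).pts (i.1+1) - (unifP hst m).pts i.1))
      = fun _ => (t-s)/((m:ℝ)+1) := funext hinc
  rw [this]
  haveI : Nonempty (Fin ((unifP hst m).n)) := ⟨⟨0, by simp [unifP]⟩⟩
  exact ciSup_const

lemma unifP_mesh_tendsto {s t : ℝ} (hst : s ≤ t) :
    Tendsto (fun m => (unifP hst m).mesh) atTop (𝓝 0) := by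
  simp only [unifP_mesh]
  have h1 : Tendsto (fun m : ℕ => 1/((m:ℝ)+1)) atTop (𝓝 0) :=
    tendsto_one_div_add_atTop_nhds_zero_nat
  have := h1.const_mul (t-s)
  rw [mul_zero] at this
  refine this.congr (fun m => by rw [one_div, div_eq_mul_inv])

lemma small_bound {C ε θ' : ℝ} (hC : 0 ≤ C) (hε : 0 < ε) (hθ' : 0 < θ') :
    ∃ η > 0, ∀ x : ℝ, 0 ≤ x → x ≤ η → C * x ^ θ' < ε := by
  refine ⟨(ε/(C+1)) ^ (1/θ'), Real.rpow_pos_of_pos (by positivity) _, ?_⟩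
  intro x hx hxη
  have h1 : x ^ θ' ≤ ((ε/(C+1)) ^ (1/θ')) ^ θ' := Real.rpow_le_rpow hx hxη hθ'.le
  rw [one_div, Real.rpow_inv_rpow (by positivity) hθ'.ne'] at h1
  calc C * x^θ' ≤ C * (ε/(C+1)) := mul_le_mul_of_nonneg_left h1 hC
    _ < ε := by
      rw [mul_div_assoc', div_lt_iff₀ (by positivity)]
      nlinarith

/-- smallness of interval controls from mesh -/
lemma mesh_control (hω : IsControl T ω) (hT0 : 0 ≤ T) {s t : ℝ} (h0 : 0 ≤ s) (hT : t ≤ T)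
    {η : ℝ} (hη : 0 < η) :
    ∃ δ > 0, ∀ π : RoughPartition s t, π.mesh < δ →
      ∀ j, j < π.n → ω (π.pts j) (π.pts (j+1)) ≤ η := by
  obtain ⟨δ, hδ, hδ'⟩ := ctrl_unif hω hT0 hη
  refine ⟨δ, hδ, fun π hmesh j hj => ?_⟩
  have ha := π.le_endpoints (j := j) (by omega)
  have hb := π.le_endpoints (j := j+1) (by omega)
  have hmono : π.pts j ≤ π.pts (j+1) := π.mono (by omega)
  have hinc := π.increment_le_mesh hj
  exact (hδ' (π.pts j) (π.pts (j+1)) (h0.trans ha.1) hmono (hb.2.trans hT)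
    (by linarith)).le

/-- concatenation of partitions -/
noncomputable def concatP {s u t : ℝ} (π1 : RoughPartition s u) (π2 : RoughPartition u t) :
    RoughPartition s t where
  n := π1.n + π2.n
  pts := fun j => if j ≤ π1.n then π1.pts (min j π1.n) else π2.pts (j - π1.n)
  mono := by
    intro j k hjk
    by_cases h1 : j ≤ π1.n <;> by_cases h2 : k ≤ π1.n
    · simp only [if_pos h1, if_pos h2]
      exact π1.mono (by omega)
    · simp only [if_pos h1, if_neg h2]
      have e1 : π1.pts (min j π1.n) ≤ u := by
        have := π1.mono (Nat.min_le_right j π1.n); rw [π1.last] at this; exact this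
      have e2 : u ≤ π2.pts (k - π1.n) := by
        have := π2.mono (Nat.zero_le (k - π1.n)); rw [π2.first] at this; exact this
      linarith
    · omega
    · simp only [if_neg h1, if_neg h2]
      exact π2.mono (by omega)
  first := by simp [π1.first]
  last := by
    rcases Nat.eq_zero_or_pos π2.n with h | h
    · rw [h]
      simp only [Nat.add_zero, if_pos le_rfl, Nat.min_self, π1.last]
      have h1 := π2.first
      have h2 := π2.last
      rw [h] at h2
      rw [← h1, h2]
    · show (if π1.n + π2.n ≤ π1.n then π1.pts (min (π1.n+π2.n) π1.n)
          else π2.pts (π1.n + π2.n - π1.n)) = t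
      rw [if_neg (by omega), Nat.add_sub_cancel_left, π2.last]

lemma concatP_pts_lt {s u t : ℝ} (π1 : RoughPartition s u) (π2 : RoughPartition u t)
    {j : ℕ} (hj : j ≤ π1.n) : (concatP π1 π2).pts j = π1.pts j := by
  show (if j ≤ π1.n then π1.pts (min j π1.n) else π2.pts (j - π1.n)) = π1.pts j
  rw [if_pos hj, Nat.min_eq_left hj]

lemma concatP_pts_ge {s u t : ℝ} (π1 : RoughPartition s u) (π2 : RoughPartition u t)
    {j : ℕ} (hj : π1.n ≤ j) : (concatP π1 π2).pts j = π2.pts (j - π1.n) := by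
  rcases Nat.lt_or_ge π1.n j with h | h
  · show (if j ≤ π1.n then π1.pts (min j π1.n) else π2.pts (j - π1.n)) = π2.pts (j - π1.n)
    rw [if_neg (by omega)]
  · show (if j ≤ π1.n then π1.pts (min j π1.n) else π2.pts (j - π1.n)) = π2.pts (j - π1.n)
    rw [if_pos (by omega : j ≤ π1.n), Nat.min_eq_left (by omega : j ≤ π1.n),
      show j - π1.n = 0 from by omega, π2.first,
      show j = π1.n from by omega, π1.last]

lemma concatP_rsum {s u t : ℝ} (π1 : RoughPartition s u) (π2 : RoughPartition u t) (f : ℝ → ℝ → V) :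
    riemannSum (concatP π1 π2) f = riemannSum π1 f + riemannSum π2 f := by
  show ∑ i ∈ Finset.range (π1.n + π2.n), _ = _
  rw [Finset.range_eq_Ico, ← Finset.sum_Ico_consecutive _ (Nat.zero_le π1.n) (by omega)]
  congr 1
  · rw [← Finset.range_eq_Ico]
    apply Finset.sum_congr rfl
    intro i hi
    have hi' := Finset.mem_range.1 hi
    rw [concatP_pts_lt π1 π2 (by omega), concatP_pts_lt π1 π2 (by omega)]
  · rw [Finset.sum_Ico_eq_sum_range, Nat.add_sub_cancel_left, riemannSum]
    apply Finset.sum_congr rfl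
    intro i _
    rw [concatP_pts_ge π1 π2 (by omega), concatP_pts_ge π1 π2 (by omega)]
    congr 2 <;> omega

lemma concatP_mesh {s u t : ℝ} (π1 : RoughPartition s u) (π2 : RoughPartition u t) :
    (concatP π1 π2).mesh ≤ π1.mesh + π2.mesh := by
  have h1 := π1.mesh_nonneg
  have h2 := π2.mesh_nonneg
  rw [RoughPartition.mesh]
  apply Real.iSup_le _ (by linarith)
  intro i
  rcases Nat.lt_or_ge i.1 π1.n with h | h
  · rw [concatP_pts_lt π1 π2 (by omega), concatP_pts_lt π1 π2 (by omega)]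
    have := π1.increment_le_mesh h
    linarith
  · have hi2 : i.1 - π1.n < π2.n := by have := i.2; simp only [concatP] at this; omega
    rw [concatP_pts_ge π1 π2 (by omega), concatP_pts_ge π1 π2 (by omega)]
    have := π2.increment_le_mesh hi2
    rw [show i.1 + 1 - π1.n = (i.1 - π1.n) + 1 from by omega]
    linarith

end Conv

section Exist

variable {V : Type*} [NormedAddCommGroup V] [NormedSpace ℝ V] [CompleteSpace V]
variable {T θ A : ℝ} {ω : ℝ → ℝ → ℝ} {Ξ : ℝ → ℝ → V}

theorem sew_exists (hω : IsControl T ω) (hT0 : 0 ≤ T) (hθ : 1 < θ) (hA : 0 ≤ A)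
    (hδ : ∀ s u t : ℝ, 0 ≤ s → s ≤ u → u ≤ t → t ≤ T →
      ‖Ξ s t - Ξ s u - Ξ u t‖ ≤ A * ω s t ^ θ) :
    ∃ I : ℝ → ℝ → V,
      (∀ s t : ℝ, 0 ≤ s → s ≤ t → t ≤ T → RSumLimit s t Ξ (I s t)) ∧
      (∀ s u t : ℝ, 0 ≤ s → s ≤ u → u ≤ t → t ≤ T → I s t = I s u + I u t) ∧
      (∀ s t : ℝ, 0 ≤ s → s ≤ t → t ≤ T → ‖I s t - Ξ s t‖ ≤ A * sewK θ * ω s t ^ θ) := by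
  classical
  set I : ℝ → ℝ → V := fun s t =>
    if hst : s ≤ t then limUnder atTop (fun m => riemannSum (unifP hst m) Ξ) else 0 with hI
  have hθ1 : (0:ℝ) < θ - 1 := by linarith
  have hcauchy : ∀ s t : ℝ, 0 ≤ s → ∀ hst : s ≤ t, t ≤ T →
      CauchySeq (fun m => riemannSum (unifP hst m) Ξ) := by
    intro s t h0 hst hT
    rw [Metric.cauchySeq_iff]
    intro ε hε
    have hωst := hω.2.2.2 s t h0 hst hT
    have hKnn := sewK_nonneg (θ := θ) hθ
    have hC0 : (0:ℝ) ≤ 2 * (A * sewK θ * ω s t) := by positivity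
    obtain ⟨η, hη, hηb⟩ := small_bound hC0 hε hθ1
    obtain ⟨δ, hδ0, hδb⟩ := mesh_control hω hT0 h0 hT hη
    have hm := unifP_mesh_tendsto hst
    rw [Metric.tendsto_atTop] at hm
    obtain ⟨M, hM⟩ := hm δ hδ0
    have hmesh : ∀ a, a ≥ M → (unifP hst a).mesh < δ := fun a ha => by
      have := hM a ha
      rwa [Real.dist_eq, sub_zero, abs_of_nonneg (RoughPartition.mesh_nonneg _)] at this
    refine ⟨M, fun a ha b hb => ?_⟩
    have h2 := two_partition_est hω hθ hA hδ h0 hT (unifP hst a) (unifP hst b) hη.le hη.le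
      (hδb _ (hmesh a ha)) (hδb _ (hmesh b hb))
    rw [dist_eq_norm]
    calc ‖riemannSum (unifP hst a) Ξ - riemannSum (unifP hst b) Ξ‖
        ≤ A * sewK θ * (η^(θ-1) + η^(θ-1)) * ω s t := h2
      _ = 2 * (A * sewK θ * ω s t) * η^(θ-1) := by ring
      _ < ε := hηb η hη.le le_rfl
  have hglim : ∀ s t : ℝ, 0 ≤ s → ∀ hst : s ≤ t, t ≤ T →
      Tendsto (fun m => riemannSum (unifP hst m) Ξ) atTop (𝓝 (I s t)) := by
    intro s t h0 hst hT
    have : I s t = limUnder atTop (fun m => riemannSum (unifP hst m) Ξ) := by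
      rw [hI]; simp only [dif_pos hst]
    rw [this]
    exact (hcauchy s t h0 hst hT).tendsto_limUnder
  have hRS : ∀ s t : ℝ, 0 ≤ s → s ≤ t → t ≤ T → RSumLimit s t Ξ (I s t) := by
    intro s t h0 hst hT π hπ
    rw [Metric.tendsto_atTop]
    intro ε hε
    have hωst := hω.2.2.2 s t h0 hst hT
    have hKnn := sewK_nonneg (θ := θ) hθ
    have hC0 : (0:ℝ) ≤ 2 * (A * sewK θ * ω s t) := by positivity
    obtain ⟨η, hη, hηb⟩ := small_bound hC0 (by linarith : (0:ℝ) < ε/2) hθ1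
    obtain ⟨δ, hδ0, hδb⟩ := mesh_control hω hT0 h0 hT hη
    rw [Metric.tendsto_atTop] at hπ
    obtain ⟨M1, hM1⟩ := hπ δ hδ0
    have hum := unifP_mesh_tendsto hst
    rw [Metric.tendsto_atTop] at hum
    obtain ⟨M3, hM3⟩ := hum δ hδ0
    have hglim' := hglim s t h0 hst hT
    rw [Metric.tendsto_atTop] at hglim'
    obtain ⟨M2, hM2⟩ := hglim' (ε/2) (by linarith)
    set m := max M2 M3 with hm
    have hmu : (unifP hst m).mesh < δ := by
      have := hM3 m (le_max_right _ _)
      rwa [Real.dist_eq, sub_zero, abs_of_nonneg (RoughPartition.mesh_nonneg _)] at this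
    refine ⟨M1, fun n hn => ?_⟩
    have hmn : (π n).mesh < δ := by
      have := hM1 n hn
      rwa [Real.dist_eq, sub_zero, abs_of_nonneg (RoughPartition.mesh_nonneg _)] at this
    have h2 := two_partition_est hω hθ hA hδ h0 hT (π n) (unifP hst m) hη.le hη.le
      (hδb _ hmn) (hδb _ hmu)
    calc dist (riemannSum (π n) Ξ) (I s t)
        ≤ dist (riemannSum (π n) Ξ) (riemannSum (unifP hst m) Ξ)
          + dist (riemannSum (unifP hst m) Ξ) (I s t) := dist_triangle _ _ _
      _ < ε/2 + ε/2 := by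
          apply add_lt_add_of_le_of_lt _ (hM2 m (le_max_left _ _))
          rw [dist_eq_norm]
          refine h2.trans ?_
          calc A * sewK θ * (η^(θ-1) + η^(θ-1)) * ω s t
              = 2 * (A * sewK θ * ω s t) * η^(θ-1) := by ring
            _ ≤ ε/2 := (hηb η hη.le le_rfl).le
      _ = ε := by ring
  refine ⟨I, hRS, ?_, ?_⟩
  · intro s u t h0 hsu hut hT
    have hst : s ≤ t := hsu.trans hut
    have l1 := hglim s u h0 hsu (hut.trans hT)
    have l2 := hglim u t (h0.trans hsu) hut hT
    have lmesh : Tendsto (fun m => (concatP (unifP hsu m) (unifP hut m)).mesh) atTop (𝓝 0) := by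
      apply squeeze_zero (fun m => RoughPartition.mesh_nonneg _)
        (fun m => concatP_mesh (unifP hsu m) (unifP hut m))
      have := (unifP_mesh_tendsto hsu).add (unifP_mesh_tendsto hut)
      simpa using this
    have l3 := hRS s t h0 hst hT (fun m => concatP (unifP hsu m) (unifP hut m)) lmesh
    have l4 : Tendsto (fun m => riemannSum (concatP (unifP hsu m) (unifP hut m)) Ξ)
        atTop (𝓝 (I s u + I u t)) := by
      refine (l1.add l2).congr (fun m => ?_)
      rw [concatP_rsum]
    exact tendsto_nhds_unique l3 l4
  · intro s t h0 hst hT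
    refine le_of_tendsto (((hglim s t h0 hst hT).sub tendsto_const_nhds).norm) ?_
    exact Filter.Eventually.of_forall (fun m => partition_est hω hθ hA hδ h0 hT _)

end Exist

section Rough

variable {T p : ℝ} {ω : ℝ → ℝ → ℝ} {d e : ℕ}
variable {X : ℝ → Fin d → ℝ} {XX : ℝ → ℝ → Fin d → Fin d → ℝ}
variable {H : ℝ → Fin e → Fin d → ℝ} {H' : ℝ → Fin d → Fin e → Fin d → ℝ}

lemma rough_delta (hT : 0 ≤ T) (hp1 : 1 ≤ p) (hω : IsControl T ω)
    (hX : IsRoughPath T p ω X XX) (hH : IsControlledPath T p ω X H H') :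
    ∃ A : ℝ, 0 ≤ A ∧ ∀ s u t : ℝ, 0 ≤ s → s ≤ u → u ≤ t → t ≤ T →
      ‖roughSummand X XX H H' s t - roughSummand X XX H H' s u
        - roughSummand X XX H H' u t‖ ≤ A * ω s t ^ (3/p) := by
  have hp0 : 0 < p := by linarith
  obtain ⟨CX, hCX⟩ := hX.1.2
  obtain ⟨CXX, hCXX⟩ := hX.2.2.1
  obtain ⟨CH', hCH'⟩ := hH.2.1.2
  obtain ⟨CR, hCR⟩ := hH.2.2
  have hchen := hX.2.2.2
  set A : ℝ := (d:ℝ) * (|CR| * |CX|) + (d:ℝ) * (d:ℝ) * (|CH'| * |CXX|) with hA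
  have hA0 : 0 ≤ A := by positivity
  refine ⟨A, hA0, fun s u t h0 hsu hut hT' => ?_⟩
  have h0u : 0 ≤ u := h0.trans hsu
  have hst : s ≤ t := hsu.trans hut
  have hsT : s ≤ T := hst.trans hT'
  have huT : u ≤ T := hut.trans hT'
  have hωsu : 0 ≤ ω s u := hω.2.2.2 s u h0 hsu huT
  have hωut : 0 ≤ ω u t := hω.2.2.2 u t h0u hut hT'
  have hωst : 0 ≤ ω s t := hω.2.2.2 s t h0 hst hT'
  have hmsu : ω s u ≤ ω s t := ctrl_mono_right hω h0 hsu hut hT'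
  have hmut : ω u t ≤ ω s t := ctrl_mono_left hω h0 hsu hut hT'
  -- componentwise bounds
  have hXb : ∀ β, |X t β - X u β| ≤ |CX| * ω u t ^ (1/p) := by
    intro β
    have h1 := hCX u t h0u hut hT'
    have h2 : |(X t - X u) β| ≤ ‖X t - X u‖ := by
      rw [← Real.norm_eq_abs]; exact norm_le_pi_norm _ β
    have h3 : (X t - X u) β = X t β - X u β := rfl
    rw [h3] at h2
    have h4 : CX * ω u t ^ (1/p) ≤ |CX| * ω u t ^ (1/p) :=
      mul_le_mul_of_nonneg_right (le_abs_self _) (Real.rpow_nonneg hωut _)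
    linarith
  have hXXb : ∀ α β, |XX u t α β| ≤ |CXX| * ω u t ^ (2/p) := by
    intro α β
    have h1 := hCXX u t h0u hut hT'
    have h2 : |XX u t α β| ≤ ‖XX u t‖ := by
      calc |XX u t α β| = ‖XX u t α β‖ := (Real.norm_eq_abs _).symm
        _ ≤ ‖XX u t α‖ := norm_le_pi_norm _ β
        _ ≤ ‖XX u t‖ := norm_le_pi_norm _ α
    have h4 : CXX * ω u t ^ (2/p) ≤ |CXX| * ω u t ^ (2/p) :=
      mul_le_mul_of_nonneg_right (le_abs_self _) (Real.rpow_nonneg hωut _)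
    linarith
  have hH'b : ∀ α k β, |H' u α k β - H' s α k β| ≤ |CH'| * ω s u ^ (1/p) := by
    intro α k β
    have h1 := hCH' s u h0 hsu huT
    have h2 : |(H' u - H' s) α k β| ≤ ‖H' u - H' s‖ := by
      calc |(H' u - H' s) α k β| = ‖(H' u - H' s) α k β‖ := (Real.norm_eq_abs _).symm
        _ ≤ ‖(H' u - H' s) α k‖ := norm_le_pi_norm _ β
        _ ≤ ‖(H' u - H' s) α‖ := norm_le_pi_norm _ k
        _ ≤ ‖H' u - H' s‖ := norm_le_pi_norm _ α
    have h3 : (H' u - H' s) α k β = H' u α k β - H' s α k β := rfl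
    rw [h3] at h2
    have h4 : CH' * ω s u ^ (1/p) ≤ |CH'| * ω s u ^ (1/p) :=
      mul_le_mul_of_nonneg_right (le_abs_self _) (Real.rpow_nonneg hωsu _)
    linarith
  have hRb : ∀ k β, |H u k β - H s k β - ∑ α, (X u α - X s α) * H' s α k β| ≤
      |CR| * ω s u ^ (2/p) := by
    intro k β
    have h1 := hCR s u h0 hsu huT
    set v := H u - H s - ∑ γ, (X u γ - X s γ) • H' s γ with hv
    have h2 : v k β = H u k β - H s k β - ∑ α, (X u α - X s α) * H' s α k β := by
      rw [hv]
      simp [Finset.sum_apply, Pi.smul_apply, smul_eq_mul]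
    have h3 : |v k β| ≤ ‖v‖ := by
      calc |v k β| = ‖v k β‖ := (Real.norm_eq_abs _).symm
        _ ≤ ‖v k‖ := norm_le_pi_norm _ β
        _ ≤ ‖v‖ := norm_le_pi_norm _ k
    rw [h2] at h3
    have h4 : CR * ω s u ^ (2/p) ≤ |CR| * ω s u ^ (2/p) :=
      mul_le_mul_of_nonneg_right (le_abs_self _) (Real.rpow_nonneg hωsu _)
    linarith
  -- the algebraic identity, componentwise
  rw [pi_norm_le_iff_of_nonneg (by
    exact mul_nonneg hA0 (Real.rpow_nonneg hωst _))]
  intro k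
  have hiden : (roughSummand X XX H H' s t - roughSummand X XX H H' s u
      - roughSummand X XX H H' u t) k =
      -((∑ β, (H u k β - H s k β - ∑ α, (X u α - X s α) * H' s α k β) * (X t β - X u β))
        + ∑ α, ∑ β, (H' u α k β - H' s α k β) * XX u t α β) := by
    have hval : (roughSummand X XX H H' s t - roughSummand X XX H H' s u
        - roughSummand X XX H H' u t) k =
        roughSummand X XX H H' s t k - roughSummand X XX H H' s u k
        - roughSummand X XX H H' u t k := rfl
    rw [hval]
    simp only [roughSummand]
    have chen_exp : ∑ α, ∑ β, H' s α k β * XX s t α β =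
        (∑ α, ∑ β, H' s α k β * XX s u α β)
        + (∑ α, ∑ β, H' s α k β * ((X u α - X s α) * (X t β - X u β)))
        + (∑ α, ∑ β, H' s α k β * XX u t α β) := by
      rw [← Finset.sum_add_distrib, ← Finset.sum_add_distrib]
      apply Finset.sum_congr rfl; intro α _
      rw [← Finset.sum_add_distrib, ← Finset.sum_add_distrib]
      apply Finset.sum_congr rfl; intro β _
      rw [hchen s u t h0 hsu hut hT' α β]; ring
    have swap : ∑ α, ∑ β, H' s α k β * ((X u α - X s α) * (X t β - X u β)) =
        ∑ β, (∑ α, (X u α - X s α) * H' s α k β) * (X t β - X u β) := by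
      rw [Finset.sum_comm]
      apply Finset.sum_congr rfl; intro β _
      rw [Finset.sum_mul]
      apply Finset.sum_congr rfl; intro α _
      ring
    have expand1 : ∑ β, (H u k β - H s k β - ∑ α, (X u α - X s α) * H' s α k β) * (X t β - X u β)
        = (∑ β, H u k β * (X t β - X u β)) - (∑ β, H s k β * (X t β - X u β))
          - ∑ β, (∑ α, (X u α - X s α) * H' s α k β) * (X t β - X u β) := by
      rw [← Finset.sum_sub_distrib, ← Finset.sum_sub_distrib]
      apply Finset.sum_congr rfl; intro β _
      ring
    have expand2 : ∑ α, ∑ β, (H' u α k β - H' s α k β) * XX u t α β =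
        (∑ α, ∑ β, H' u α k β * XX u t α β) - ∑ α, ∑ β, H' s α k β * XX u t α β := by
      rw [← Finset.sum_sub_distrib]
      apply Finset.sum_congr rfl; intro α _
      rw [← Finset.sum_sub_distrib]
      apply Finset.sum_congr rfl; intro β _
      ring
    have e3 : (∑ γ, H s k γ * (X t γ - X s γ)) - ∑ γ, H s k γ * (X u γ - X s γ) =
        ∑ γ, H s k γ * (X t γ - X u γ) := by
      rw [← Finset.sum_sub_distrib]
      apply Finset.sum_congr rfl; intro γ _
      ring
    rw [chen_exp, expand1, expand2, swap]
    linarith [e3]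
  rw [hiden, Real.norm_eq_abs, abs_neg]
  -- now the bound
  have hb1 : |∑ β, (H u k β - H s k β - ∑ α, (X u α - X s α) * H' s α k β) * (X t β - X u β)|
      ≤ (d:ℝ) * ((|CR| * ω s u ^ (2/p)) * (|CX| * ω u t ^ (1/p))) := by
    calc |∑ β, (H u k β - H s k β - ∑ α, (X u α - X s α) * H' s α k β) * (X t β - X u β)|
        ≤ ∑ β, |(H u k β - H s k β - ∑ α, (X u α - X s α) * H' s α k β) * (X t β - X u β)| :=
          Finset.abs_sum_le_sum_abs _ _
      _ ≤ ∑ β : Fin d, (|CR| * ω s u ^ (2/p)) * (|CX| * ω u t ^ (1/p)) := by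
          apply Finset.sum_le_sum
          intro β _
          rw [abs_mul]
          exact mul_le_mul (hRb k β) (hXb β) (abs_nonneg _) (by positivity)
      _ = (d:ℝ) * ((|CR| * ω s u ^ (2/p)) * (|CX| * ω u t ^ (1/p))) := by
          rw [Finset.sum_const, Finset.card_univ, Fintype.card_fin, nsmul_eq_mul]
  have hb2 : |∑ α, ∑ β, (H' u α k β - H' s α k β) * XX u t α β|
      ≤ (d:ℝ) * (d:ℝ) * ((|CH'| * ω s u ^ (1/p)) * (|CXX| * ω u t ^ (2/p))) := by
    calc |∑ α, ∑ β, (H' u α k β - H' s α k β) * XX u t α β|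
        ≤ ∑ α, |∑ β, (H' u α k β - H' s α k β) * XX u t α β| := Finset.abs_sum_le_sum_abs _ _
      _ ≤ ∑ α : Fin d, ∑ β : Fin d, |(H' u α k β - H' s α k β) * XX u t α β| := by
          apply Finset.sum_le_sum
          intro α _
          exact Finset.abs_sum_le_sum_abs _ _
      _ ≤ ∑ _α : Fin d, ∑ _β : Fin d, (|CH'| * ω s u ^ (1/p)) * (|CXX| * ω u t ^ (2/p)) := by
          apply Finset.sum_le_sum
          intro α _
          apply Finset.sum_le_sum
          intro β _
          rw [abs_mul]
          exact mul_le_mul (hH'b α k β) (hXXb α β) (abs_nonneg _) (by positivity)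
      _ = (d:ℝ) * (d:ℝ) * ((|CH'| * ω s u ^ (1/p)) * (|CXX| * ω u t ^ (2/p))) := by
          rw [Finset.sum_const, Finset.sum_const, Finset.card_univ, Fintype.card_fin,
            nsmul_eq_mul, nsmul_eq_mul]
          ring
  -- rpow combination
  have hsplit : ω s u ^ (2/p) * ω u t ^ (1/p) ≤ ω s t ^ (3/p) := by
    have h1 : ω s u ^ (2/p) ≤ ω s t ^ (2/p) := Real.rpow_le_rpow hωsu hmsu (by positivity)
    have h2 : ω u t ^ (1/p) ≤ ω s t ^ (1/p) := Real.rpow_le_rpow hωut hmut (by positivity)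
    calc ω s u ^ (2/p) * ω u t ^ (1/p) ≤ ω s t ^ (2/p) * ω s t ^ (1/p) :=
        mul_le_mul h1 h2 (Real.rpow_nonneg hωut _) (Real.rpow_nonneg hωst _)
      _ = ω s t ^ (3/p) := by
        rw [← Real.rpow_add_of_nonneg hωst (by positivity) (by positivity)]
        congr 1
        ring
  have hsplit2 : ω s u ^ (1/p) * ω u t ^ (2/p) ≤ ω s t ^ (3/p) := by
    have h1 : ω s u ^ (1/p) ≤ ω s t ^ (1/p) := Real.rpow_le_rpow hωsu hmsu (by positivity)
    have h2 : ω u t ^ (2/p) ≤ ω s t ^ (2/p) := Real.rpow_le_rpow hωut hmut (by positivity)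
    calc ω s u ^ (1/p) * ω u t ^ (2/p) ≤ ω s t ^ (1/p) * ω s t ^ (2/p) :=
        mul_le_mul h1 h2 (Real.rpow_nonneg hωut _) (Real.rpow_nonneg hωst _)
      _ = ω s t ^ (3/p) := by
        rw [← Real.rpow_add_of_nonneg hωst (by positivity) (by positivity)]
        congr 1
        ring
  calc |(∑ β, (H u k β - H s k β - ∑ α, (X u α - X s α) * H' s α k β) * (X t β - X u β))
        + ∑ α, ∑ β, (H' u α k β - H' s α k β) * XX u t α β|
      ≤ |∑ β, (H u k β - H s k β - ∑ α, (X u α - X s α) * H' s α k β) * (X t β - X u β)|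
        + |∑ α, ∑ β, (H' u α k β - H' s α k β) * XX u t α β| := abs_add_le _ _
    _ ≤ (d:ℝ) * ((|CR| * ω s u ^ (2/p)) * (|CX| * ω u t ^ (1/p)))
        + (d:ℝ) * (d:ℝ) * ((|CH'| * ω s u ^ (1/p)) * (|CXX| * ω u t ^ (2/p))) :=
        add_le_add hb1 hb2
    _ ≤ A * ω s t ^ (3/p) := by
        rw [hA]
        have g1 : (|CR| * ω s u ^ (2/p)) * (|CX| * ω u t ^ (1/p)) =
            (|CR| * |CX|) * (ω s u ^ (2/p) * ω u t ^ (1/p)) := by ring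
        have g2 : (|CH'| * ω s u ^ (1/p)) * (|CXX| * ω u t ^ (2/p)) =
            (|CH'| * |CXX|) * (ω s u ^ (1/p) * ω u t ^ (2/p)) := by ring
        rw [g1, g2]
        have t1 : (|CR| * |CX|) * (ω s u ^ (2/p) * ω u t ^ (1/p)) ≤
            (|CR| * |CX|) * ω s t ^ (3/p) :=
          mul_le_mul_of_nonneg_left hsplit (by positivity)
        have t2 : (|CH'| * |CXX|) * (ω s u ^ (1/p) * ω u t ^ (2/p)) ≤
            (|CH'| * |CXX|) * ω s t ^ (3/p) :=
          mul_le_mul_of_nonneg_left hsplit2 (by positivity)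
        have hd0 : (0:ℝ) ≤ (d:ℝ) := Nat.cast_nonneg d
        nlinarith [mul_le_mul_of_nonneg_left t1 hd0,
          mul_le_mul_of_nonneg_left t2 (mul_nonneg hd0 hd0)]

end Rough

end AuxSewing

/-- Existence of the rough integral of a controlled integrand: the
compensated Riemann sums converge, the limit is additive, approximated by the local
expansion up to `O(ω^{3/p})`, and defines a path in `C^p_ω([0,T],ℝ^e)`. -/
theorem statement5 (T p : ℝ) (hT : 0 ≤ T) (hp1 : 1 ≤ p) (hp3 : p < 3) (d e : ℕ)
    (ω : ℝ → ℝ → ℝ) (hω : IsControl T ω)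
    (X : ℝ → Fin d → ℝ) (XX : ℝ → ℝ → Fin d → Fin d → ℝ)
    (hX : IsRoughPath T p ω X XX)
    (H : ℝ → Fin e → Fin d → ℝ) (H' : ℝ → Fin d → Fin e → Fin d → ℝ)
    (hH : IsControlledPath T p ω X H H') :
    ∃ I : ℝ → ℝ → Fin e → ℝ,
      (∀ s t : ℝ, 0 ≤ s → s ≤ t → t ≤ T →
        RSumLimit s t (roughSummand X XX H H') (I s t)) ∧
      (∀ s u t : ℝ, 0 ≤ s → s ≤ u → u ≤ t → t ≤ T → I s t = I s u + I u t) ∧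
      (∃ C : ℝ, ∀ s t : ℝ, 0 ≤ s → s ≤ t → t ≤ T →
        ‖I s t - roughSummand X XX H H' s t‖ ≤ C * ω s t ^ (3 / p)) ∧
      ContinuousOn (fun t => I 0 t) (Set.Icc 0 T) ∧
      (∃ C : ℝ, ∀ s t : ℝ, 0 ≤ s → s ≤ t → t ≤ T → ‖I s t‖ ≤ C * ω s t ^ (1 / p)) := by
  have hp0 : 0 < p := by linarith
  have hθ : 1 < 3/p := (one_lt_div hp0).2 hp3
  obtain ⟨A, hA0, hδ⟩ := rough_delta hT hp1 hω hX hH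
  obtain ⟨I, hRS, hadd, hloc⟩ := sew_exists (V := Fin e → ℝ) hω hT hθ hA0 hδ
  set Ξ := roughSummand X XX H H' with hΞ
  -- sup bounds on H and H'
  obtain ⟨MH, hMH⟩ := (isCompact_Icc (a := (0:ℝ)) (b := T)).exists_bound_of_continuousOn hH.1.1
  obtain ⟨MH', hMH'⟩ := (isCompact_Icc (a := (0:ℝ)) (b := T)).exists_bound_of_continuousOn hH.2.1.1
  have h0T : (0:ℝ) ∈ Set.Icc (0:ℝ) T := ⟨le_rfl, hT⟩
  have hMH0 : 0 ≤ MH := (norm_nonneg _).trans (hMH 0 h0T)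
  have hMH'0 : 0 ≤ MH' := (norm_nonneg _).trans (hMH' 0 h0T)
  obtain ⟨CX, hCX⟩ := hX.1.2
  obtain ⟨CXX, hCXX⟩ := hX.2.2.1
  -- componentwise bounds
  have hHb : ∀ x ∈ Set.Icc (0:ℝ) T, ∀ k γ, |H x k γ| ≤ MH := by
    intro x hx k γ
    calc |H x k γ| = ‖H x k γ‖ := (Real.norm_eq_abs _).symm
      _ ≤ ‖H x k‖ := norm_le_pi_norm _ γ
      _ ≤ ‖H x‖ := norm_le_pi_norm _ k
      _ ≤ MH := hMH x hx
  have hH'b : ∀ x ∈ Set.Icc (0:ℝ) T, ∀ α k β, |H' x α k β| ≤ MH' := by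
    intro x hx α k β
    calc |H' x α k β| = ‖H' x α k β‖ := (Real.norm_eq_abs _).symm
      _ ≤ ‖H' x α k‖ := norm_le_pi_norm _ β
      _ ≤ ‖H' x α‖ := norm_le_pi_norm _ k
      _ ≤ ‖H' x‖ := norm_le_pi_norm _ α
      _ ≤ MH' := hMH' x hx
  -- bound on the summand
  have hΞb : ∀ s t : ℝ, 0 ≤ s → s ≤ t → t ≤ T →
      ‖Ξ s t‖ ≤ (d:ℝ) * (MH * |CX|) * ω s t ^ (1/p)
        + (d:ℝ) * (d:ℝ) * (MH' * |CXX|) * ω s t ^ (2/p) := by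
    intro s t h0 hst hT'
    have hωst : 0 ≤ ω s t := hω.2.2.2 s t h0 hst hT'
    have hsMem : s ∈ Set.Icc (0:ℝ) T := ⟨h0, hst.trans hT'⟩
    have hXb : ∀ γ, |X t γ - X s γ| ≤ |CX| * ω s t ^ (1/p) := by
      intro γ
      have h1 := hCX s t h0 hst hT'
      have h2 : |(X t - X s) γ| ≤ ‖X t - X s‖ := by
        rw [← Real.norm_eq_abs]; exact norm_le_pi_norm _ γ
      have h3 : (X t - X s) γ = X t γ - X s γ := rfl
      rw [h3] at h2
      have h4 : CX * ω s t ^ (1/p) ≤ |CX| * ω s t ^ (1/p) :=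
        mul_le_mul_of_nonneg_right (le_abs_self _) (Real.rpow_nonneg hωst _)
      linarith
    have hXXb : ∀ α β, |XX s t α β| ≤ |CXX| * ω s t ^ (2/p) := by
      intro α β
      have h1 := hCXX s t h0 hst hT'
      have h2 : |XX s t α β| ≤ ‖XX s t‖ := by
        calc |XX s t α β| = ‖XX s t α β‖ := (Real.norm_eq_abs _).symm
          _ ≤ ‖XX s t α‖ := norm_le_pi_norm _ β
          _ ≤ ‖XX s t‖ := norm_le_pi_norm _ α
      have h4 : CXX * ω s t ^ (2/p) ≤ |CXX| * ω s t ^ (2/p) :=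
        mul_le_mul_of_nonneg_right (le_abs_self _) (Real.rpow_nonneg hωst _)
      linarith
    rw [pi_norm_le_iff_of_nonneg (by positivity)]
    intro k
    rw [Real.norm_eq_abs]
    calc |Ξ s t k| ≤ |∑ γ, H s k γ * (X t γ - X s γ)|
          + |∑ α, ∑ β, H' s α k β * XX s t α β| := abs_add_le _ _
      _ ≤ (d:ℝ) * (MH * (|CX| * ω s t ^ (1/p)))
          + (d:ℝ) * (d:ℝ) * (MH' * (|CXX| * ω s t ^ (2/p))) := by
          apply add_le_add
          · calc |∑ γ, H s k γ * (X t γ - X s γ)| ≤ ∑ γ, |H s k γ * (X t γ - X s γ)| :=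
              Finset.abs_sum_le_sum_abs _ _
            _ ≤ ∑ _γ : Fin d, MH * (|CX| * ω s t ^ (1/p)) := by
                apply Finset.sum_le_sum
                intro γ _
                rw [abs_mul]
                exact mul_le_mul (hHb s hsMem k γ) (hXb γ) (abs_nonneg _) hMH0
            _ = (d:ℝ) * (MH * (|CX| * ω s t ^ (1/p))) := by
                rw [Finset.sum_const, Finset.card_univ, Fintype.card_fin, nsmul_eq_mul]
          · calc |∑ α, ∑ β, H' s α k β * XX s t α β|
                ≤ ∑ α, |∑ β, H' s α k β * XX s t α β| := Finset.abs_sum_le_sum_abs _ _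
            _ ≤ ∑ _α : Fin d, ∑ _β : Fin d, MH' * (|CXX| * ω s t ^ (2/p)) := by
                apply Finset.sum_le_sum
                intro α _
                refine (Finset.abs_sum_le_sum_abs _ _).trans ?_
                apply Finset.sum_le_sum
                intro β _
                rw [abs_mul]
                exact mul_le_mul (hH'b s hsMem α k β) (hXXb α β) (abs_nonneg _) hMH'0
            _ = (d:ℝ) * (d:ℝ) * (MH' * (|CXX| * ω s t ^ (2/p))) := by
                rw [Finset.sum_const, Finset.sum_const, Finset.card_univ, Fintype.card_fin,
                  nsmul_eq_mul, nsmul_eq_mul]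
                ring
      _ = (d:ℝ) * (MH * |CX|) * ω s t ^ (1/p)
          + (d:ℝ) * (d:ℝ) * (MH' * |CXX|) * ω s t ^ (2/p) := by ring
  -- ω bounded by ω 0 T and rpow comparisons
  set W := ω 0 T with hW
  have hW0 : 0 ≤ W := hω.2.2.2 0 T le_rfl hT le_rfl
  have hωle : ∀ s t : ℝ, 0 ≤ s → s ≤ t → t ≤ T → ω s t ≤ W := by
    intro s t h0 hst hT'
    calc ω s t ≤ ω 0 t := ctrl_mono_left hω le_rfl h0 hst hT'
      _ ≤ ω 0 T := ctrl_mono_right hω le_rfl (h0.trans hst) hT' le_rfl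
  set C3 := A * sewK (3/p) with hC3
  have hC30 : 0 ≤ C3 := mul_nonneg hA0 (sewK_nonneg hθ)
  set CI := (d:ℝ) * (MH * |CX|) + (d:ℝ) * (d:ℝ) * (MH' * |CXX|) * W ^ (1/p)
    + C3 * W ^ (2/p) with hCI
  have hCI0 : 0 ≤ CI := by positivity
  have hIb : ∀ s t : ℝ, 0 ≤ s → s ≤ t → t ≤ T → ‖I s t‖ ≤ CI * ω s t ^ (1/p) := by
    intro s t h0 hst hT'
    have hωst : 0 ≤ ω s t := hω.2.2.2 s t h0 hst hT'
    have hr1 : (0:ℝ) ≤ ω s t ^ (1/p) := Real.rpow_nonneg hωst _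
    have e2 : ω s t ^ (2/p) ≤ W ^ (1/p) * ω s t ^ (1/p) := by
      have : ω s t ^ (2/p) = ω s t ^ (1/p) * ω s t ^ (1/p) := by
        rw [← Real.rpow_add_of_nonneg hωst (by positivity) (by positivity)]
        congr 1; ring
      rw [this]
      exact mul_le_mul_of_nonneg_right
        (Real.rpow_le_rpow hωst (hωle s t h0 hst hT') (by positivity)) hr1
    have e3 : ω s t ^ (3/p) ≤ W ^ (2/p) * ω s t ^ (1/p) := by
      have : ω s t ^ (3/p) = ω s t ^ (2/p) * ω s t ^ (1/p) := by
        rw [← Real.rpow_add_of_nonneg hωst (by positivity) (by positivity)]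
        congr 1; ring
      rw [this]
      exact mul_le_mul_of_nonneg_right
        (Real.rpow_le_rpow hωst (hωle s t h0 hst hT') (by positivity)) hr1
    calc ‖I s t‖ ≤ ‖I s t - Ξ s t‖ + ‖Ξ s t‖ := by
          rw [show I s t = (I s t - Ξ s t) + Ξ s t from by abel]
          exact (norm_add_le _ _).trans (by rw [show ((I s t - Ξ s t) + Ξ s t) - Ξ s t = I s t - Ξ s t from by abel])
      _ ≤ C3 * ω s t ^ (3/p) + ((d:ℝ) * (MH * |CX|) * ω s t ^ (1/p)
          + (d:ℝ) * (d:ℝ) * (MH' * |CXX|) * ω s t ^ (2/p)) :=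
          add_le_add (hloc s t h0 hst hT') (hΞb s t h0 hst hT')
      _ ≤ CI * ω s t ^ (1/p) := by
          rw [hCI]
          have t2 := mul_le_mul_of_nonneg_left e2 (by positivity : (0:ℝ) ≤ (d:ℝ)*(d:ℝ)*(MH'*|CXX|))
          have t3 := mul_le_mul_of_nonneg_left e3 hC30
          nlinarith
  refine ⟨I, hRS, hadd, ⟨C3, hloc⟩, ?_, ⟨CI, hIb⟩⟩
  -- continuity of t ↦ I 0 t on [0,T]
  intro a ha
  rw [Metric.continuousWithinAt_iff]
  intro ε hε
  obtain ⟨η, hη, hηb⟩ := small_bound (C := CI) hCI0 hε (by positivity : (0:ℝ) < 1/p)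
  obtain ⟨δ, hδ0, hδb⟩ := ctrl_unif hω hT hη
  refine ⟨δ, hδ0, fun {x} hx hdist => ?_⟩
  rcases le_total x a with hxa | hax
  · have h1 : I 0 a = I 0 x + I x a := hadd 0 x a le_rfl hx.1 hxa ha.2
    have h2 : dist (I 0 x) (I 0 a) = ‖I x a‖ := by
      rw [dist_eq_norm, h1, show I 0 x - (I 0 x + I x a) = -(I x a) from by abel, norm_neg]
    rw [h2]
    have hωxa : ω x a < η := hδb x a hx.1 hxa ha.2 (by
      rw [Real.dist_eq, abs_sub_comm, abs_of_nonneg (by linarith : (0:ℝ) ≤ a - x)] at hdist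
      linarith)
    have hωxa0 : 0 ≤ ω x a := hω.2.2.2 x a hx.1 hxa ha.2
    calc ‖I x a‖ ≤ CI * ω x a ^ (1/p) := hIb x a hx.1 hxa ha.2
      _ < ε := hηb (ω x a) hωxa0 hωxa.le
  · have h1 : I 0 x = I 0 a + I a x := hadd 0 a x le_rfl ha.1 hax hx.2
    have h2 : dist (I 0 x) (I 0 a) = ‖I a x‖ := by
      rw [dist_eq_norm, h1, show (I 0 a + I a x) - I 0 a = I a x from by abel]
    rw [h2]
    have hωax : ω a x < η := hδb a x ha.1 hax hx.2 (by
      rw [Real.dist_eq, abs_of_nonneg (by linarith : (0:ℝ) ≤ x - a)] at hdist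
      linarith)
    have hωax0 : 0 ≤ ω a x := hω.2.2.2 a x ha.1 hax hx.2
    calc ‖I a x‖ ≤ CI * ω a x ^ (1/p) := hIb a x ha.1 hax hx.2
      _ < ε := hηb (ω a x) hωax0 hωax.le
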